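/- Let n ≥ 1 and let v : ℝ × ℝⁿ → ℝⁿ be continuously differentiable and divergence-free in the spatial variable: for every (t, x), the trace of the spatial Fréchet derivative D_x v(t, x) is zero. Let Φ : ℝ × ℝⁿ → ℝⁿ be twice continuously differentiable (ContDiff ℝ 2 as a function of the joint variable) and satisfy ∂_t Φ(t, x) = v(t, Φ(t, x)) for all (t, x), and Φ(0, x) = x for all x. Then for every t ∈ ℝ and x ∈ ℝⁿ, the spatial Jacobian determinant satisfies det(D_x Φ(t, x)) = 1; in particular, the time-one map u(x) = Φ(1, x) satisfies det(D_x u) = 1 for all x, i.e., u is measure-preserving. -/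

import Mathlib

open Function

noncomputable def detCM (n : ℕ) :
    ContinuousMultilinearMap ℝ (fun _ : Fin n => (Fin n → ℝ)) ℝ :=
  MultilinearMap.mkContinuous
    (Matrix.detRowAlternating (n := Fin n) (R := ℝ)).toMultilinearMap
    (Fintype.card (Equiv.Perm (Fin n)))
    (by
      intro m
      show ‖(Matrix.of m).det‖ ≤ _
      rw [Matrix.det_apply']
      refine (norm_sum_le _ _).trans ?_
      have hterm : ∀ σ : Equiv.Perm (Fin n),
          ‖((Equiv.Perm.sign σ : ℤ) : ℝ) * ∏ i, Matrix.of m (σ i) i‖ ≤ ∏ i, ‖m i‖ := by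
        intro σ
        rw [norm_mul]
        have hε : ‖(((Equiv.Perm.sign σ : ℤ) : ℝ) : ℝ)‖ = 1 := by
          rcases Int.units_eq_one_or (Equiv.Perm.sign σ) with h | h <;>
            simp [h]
        rw [hε, one_mul, norm_prod]
        calc ∏ i, ‖Matrix.of m (σ i) i‖ ≤ ∏ i, ‖m (σ i)‖ := by
              refine Finset.prod_le_prod (fun i _ => norm_nonneg _) (fun i _ => ?_)
              exact norm_le_pi_norm (m (σ i)) i
          _ = ∏ i, ‖m i‖ := Equiv.prod_comp σ (fun i => ‖m i‖)
      refine (Finset.sum_le_sum (fun σ _ => hterm σ)).trans_eq ?_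
      rw [Finset.sum_const, Finset.card_univ, nsmul_eq_mul])

theorem detCM_apply (n : ℕ) (m : Fin n → Fin n → ℝ) :
    detCM n m = (Matrix.of m).det := rfl

theorem hasDerivAt_matrix_det (n : ℕ) (r : ℝ → Fin n → Fin n → ℝ)
    (r' : Fin n → Fin n → ℝ) (t : ℝ) (h : HasDerivAt r r' t) :
    HasDerivAt (fun s => (Matrix.of (r s)).det)
      (∑ i, ((Matrix.of (r t)).updateRow i (r' i)).det) t := by
  have h1 : HasDerivAt (fun s => detCM n (r s))
      (((detCM n).linearDeriv (r t)) r') t :=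
    ((detCM n).hasFDerivAt (r t)).comp_hasDerivAt t h
  have h2 : ((detCM n).linearDeriv (r t)) r'
      = ∑ i, ((Matrix.of (r t)).updateRow i (r' i)).det := by
    rw [ContinuousMultilinearMap.linearDeriv_apply]
    rfl
  rw [← h2]
  exact h1

set_option maxHeartbeats 2000000 in
theorem jacobian_det_one_of_divergence_free (n : ℕ) (hn : 1 ≤ n)
    (v Φ : ℝ → EuclideanSpace ℝ (Fin n) → EuclideanSpace ℝ (Fin n))
    (hv : ContDiff ℝ 1 (Function.uncurry v))
    (hdiv : ∀ (t : ℝ) (x : EuclideanSpace ℝ (Fin n)),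
      LinearMap.trace ℝ (EuclideanSpace ℝ (Fin n)) (fderiv ℝ (v t) x).toLinearMap = 0)
    (hΦ : ContDiff ℝ 2 (Function.uncurry Φ))
    (hode : ∀ (t : ℝ) (x : EuclideanSpace ℝ (Fin n)),
      HasDerivAt (fun s => Φ s x) (v t (Φ t x)) t)
    (h0 : ∀ x, Φ 0 x = x) :
    (∀ (t : ℝ) (x : EuclideanSpace ℝ (Fin n)), (fderiv ℝ (Φ t) x).det = 1) ∧
    (∀ x : EuclideanSpace ℝ (Fin n), (fderiv ℝ (fun y => Φ 1 y) x).det = 1) := by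
  have key : ∀ (t : ℝ) (x : EuclideanSpace ℝ (Fin n)), (fderiv ℝ (Φ t) x).det = 1 := by
    intro t₀ x
    let E := EuclideanSpace ℝ (Fin n)
    set ι : E →L[ℝ] ℝ × E := (0 : E →L[ℝ] ℝ).prod (ContinuousLinearMap.id ℝ E) with hι
    have hιap : ∀ w : E, ι w = (0, w) := fun w => rfl
    have hΦdiff : Differentiable ℝ (Function.uncurry Φ) := hΦ.differentiable two_ne_zero
    have hFc : ContDiff ℝ 1 (fderiv ℝ (Function.uncurry Φ)) :=
      hΦ.fderiv_right (le_refl 2)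
    have hFdiff : Differentiable ℝ (fderiv ℝ (Function.uncurry Φ)) :=
      hFc.differentiable one_ne_zero
    have hvdiff : Differentiable ℝ (Function.uncurry v) := hv.differentiable one_ne_zero
    have hinc : ∀ (t : ℝ) (y : E), HasFDerivAt (fun z : E => ((t, z) : ℝ × E)) ι y := by
      intro t y
      exact HasFDerivAt.prodMk (hasFDerivAt_const t y) (hasFDerivAt_id y)
    have hJd : ∀ (t : ℝ) (y : E),
        HasFDerivAt (Φ t) ((fderiv ℝ (Function.uncurry Φ) (t, y)).comp ι) y := by
      intro t y
      exact ((hΦdiff (t, y)).hasFDerivAt).comp y (hinc t y)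
    have hvel : ∀ (t : ℝ) (y : E),
        fderiv ℝ (Function.uncurry Φ) (t, y) ((1 : ℝ), (0 : E)) = v t (Φ t y) := by
      intro t y
      have hc : HasDerivAt (fun s : ℝ => ((s, y) : ℝ × E)) ((1 : ℝ), (0 : E)) t :=
        HasDerivAt.prodMk (hasDerivAt_id t) (hasDerivAt_const t y)
      have h1 := ((hΦdiff (t, y)).hasFDerivAt).comp_hasDerivAt t hc
      have h2 : HasDerivAt (fun s => Φ s y)
          (fderiv ℝ (Function.uncurry Φ) (t, y) ((1 : ℝ), (0 : E))) t := h1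
      exact h2.unique (hode t y)
    have hvt : ∀ (t : ℝ) (p : E), DifferentiableAt ℝ (v t) p := by
      intro t p
      have h1 : DifferentiableAt ℝ (fun z : E => Function.uncurry v (t, z)) p :=
        (hvdiff (t, p)).comp p ((hinc t p).differentiableAt)
      exact h1
    -- abbreviations
    set J : ℝ → (E →L[ℝ] E) :=
      fun t => (fderiv ℝ (Function.uncurry Φ) (t, x)).comp ι with hJ
    set B : ℝ → (E →L[ℝ] E) := fun t => fderiv ℝ (v t) (Φ t x) with hB
    -- key ODE for J
    have hJ' : ∀ t : ℝ, HasDerivAt J ((B t).comp (J t)) t := by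
      intro t
      have hc : HasDerivAt (fun s : ℝ => ((s, x) : ℝ × E)) ((1 : ℝ), (0 : E)) t :=
        HasDerivAt.prodMk (hasDerivAt_id t) (hasDerivAt_const t x)
      set K := fderiv ℝ (fderiv ℝ (Function.uncurry Φ)) (t, x) with hK
      have hKt : HasDerivAt (fun s => fderiv ℝ (Function.uncurry Φ) (s, x))
          (K ((1 : ℝ), (0 : E))) t :=
        ((hFdiff (t, x)).hasFDerivAt).comp_hasDerivAt t hc
      set precomp : (ℝ × E →L[ℝ] E) →L[ℝ] (E →L[ℝ] E) :=
        (ContinuousLinearMap.compL ℝ E (ℝ × E) E).flip ι with hpre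
      have hJt : HasDerivAt J (precomp (K ((1 : ℝ), (0 : E)))) t :=
        (precomp.hasFDerivAt).comp_hasDerivAt t hKt
      have hsym : ∀ a b : ℝ × E, K a b = K b a := by
        intro a b
        exact (hΦ.contDiffAt.isSymmSndFDerivAt (by simp [minSmoothness_of_isRCLikeNormedField])) a b
      -- identify the derivative
      have heq : precomp (K ((1 : ℝ), (0 : E))) = (B t).comp (J t) := by
        -- evaluation functional at (1,0)
        set Aev : (ℝ × E →L[ℝ] E) →L[ℝ] E :=
          (ContinuousLinearMap.id ℝ (ℝ × E →L[ℝ] E)).flip ((1 : ℝ), (0 : E)) with hAev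
        have hAevap : ∀ L : ℝ × E →L[ℝ] E, Aev L = L ((1 : ℝ), (0 : E)) := fun _ => rfl
        have hW : HasFDerivAt (fun p : ℝ × E => fderiv ℝ (Function.uncurry Φ) p ((1:ℝ), (0:E)))
            (Aev.comp K) (t, x) :=
          (Aev.hasFDerivAt).comp (t, x) ((hFdiff (t, x)).hasFDerivAt)
        have hWs : HasFDerivAt
            (fun y : E => fderiv ℝ (Function.uncurry Φ) (t, y) ((1:ℝ), (0:E)))
            ((Aev.comp K).comp ι) x :=
          hW.comp x (hinc t x)
        have hWeq : (fun y : E => fderiv ℝ (Function.uncurry Φ) (t, y) ((1:ℝ), (0:E)))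
            = fun y : E => v t (Φ t y) := by
          funext y; exact hvel t y
        have hcomp : HasFDerivAt (fun y : E => v t (Φ t y)) ((B t).comp (J t)) x :=
          ((hvt t (Φ t x)).hasFDerivAt).comp x (hJd t x)
        rw [hWeq] at hWs
        have huniq : (Aev.comp K).comp ι = (B t).comp (J t) := hWs.unique hcomp
        ext w
        have h1 := congrFun (congrArg (DFunLike.coe) huniq) w
        simp only [ContinuousLinearMap.comp_apply] at h1 ⊢
        rw [show precomp (K ((1:ℝ), (0:E))) w = K ((1:ℝ), (0:E)) (ι w) from rfl]
        rw [hsym ((1:ℝ), (0:E)) (ι w)]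
        rw [hιap w] at h1 ⊢
        rw [← h1]
        rfl
      rw [← heq]
      exact hJt
    -- pass to matrices
    let b : Module.Basis (Fin n) ℝ E := (EuclideanSpace.basisFun (Fin n) ℝ).toBasis
    let Ψlin : (E →L[ℝ] E) →ₗ[ℝ] (Fin n → Fin n → ℝ) :=
      { toFun := fun L i j => LinearMap.toMatrix b b (L : E →ₗ[ℝ] E) i j
        map_add' := by
          intro f g
          funext i j
          simp
        map_smul' := by
          intro c f
          funext i j
          simp }
    let ΨL : (E →L[ℝ] E) →L[ℝ] (Fin n → Fin n → ℝ) :=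
      LinearMap.toContinuousLinearMap Ψlin
    have hΨap : ∀ L : E →L[ℝ] E,
        Matrix.of (ΨL L) = LinearMap.toMatrix b b (L : E →ₗ[ℝ] E) := fun _ => rfl
    have hgdet : ∀ t : ℝ, (Matrix.of (ΨL (J t))).det = (J t).det := by
      intro t
      rw [hΨap, LinearMap.det_toMatrix]
    have hg' : ∀ t : ℝ, HasDerivAt (fun s => (Matrix.of (ΨL (J s))).det) 0 t := by
      intro t
      have hr : HasDerivAt (fun s => ΨL (J s)) (ΨL ((B t).comp (J t))) t :=
        (ΨL.hasFDerivAt).comp_hasDerivAt t (hJ' t)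
      have hdet := hasDerivAt_matrix_det n (fun s => ΨL (J s)) (ΨL ((B t).comp (J t))) t hr
      have hzero : ∑ i, ((Matrix.of (ΨL (J t))).updateRow i (ΨL ((B t).comp (J t)) i)).det
          = 0 := by
        set A := LinearMap.toMatrix b b ((B t : E →ₗ[ℝ] E)) with hA
        set M := Matrix.of (ΨL (J t)) with hM
        have hmul : Matrix.of (ΨL ((B t).comp (J t))) = A * M := by
          rw [hΨap, hM, hΨap, hA, ContinuousLinearMap.toLinearMap_comp,
            LinearMap.toMatrix_comp b b b]
        have hrow : ∀ i, ΨL ((B t).comp (J t)) i = ∑ j, A i j • M j := by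
          intro i
          funext k
          have h1 : ΨL ((B t).comp (J t)) i k = (A * M) i k :=
            congrFun (congrFun hmul i) k
          rw [h1, Matrix.mul_apply]
          simp [Finset.sum_apply]
        have hterm : ∀ i, ((M.updateRow i (ΨL ((B t).comp (J t)) i))).det
            = A i i * M.det := by
          intro i
          rw [hrow i, Matrix.det_updateRow_sum M i (fun j => A i j), smul_eq_mul]
        rw [Finset.sum_congr rfl (fun i _ => hterm i), ← Finset.sum_mul]
        have htr : ∑ i, A i i = 0 := by
          have h1 := LinearMap.trace_eq_matrix_trace ℝ b ((B t : E →ₗ[ℝ] E))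
          have h2 : LinearMap.trace ℝ E ((B t : E →ₗ[ℝ] E)) = 0 := hdiv t (Φ t x)
          rw [h2] at h1
          calc ∑ i, A i i = Matrix.trace A := by simp [Matrix.trace, Matrix.diag]
            _ = 0 := by rw [hA]; exact h1.symm
        rw [htr, zero_mul]
      rw [hzero] at hdet
      exact hdet
    -- the determinant is constant
    have hconst : (Matrix.of (ΨL (J t₀))).det = (Matrix.of (ΨL (J 0))).det := by
      have hdiffg : Differentiable ℝ (fun s => (Matrix.of (ΨL (J s))).det) :=
        fun s => (hg' s).differentiableAt
      exact is_const_of_deriv_eq_zero hdiffg (fun s => (hg' s).deriv) t₀ 0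
    have hJ0 : (J 0).det = 1 := by
      have h1 : fderiv ℝ (Φ 0) x = J 0 := (hJd 0 x).fderiv
      have h2 : Φ 0 = fun y : E => y := funext h0
      rw [← h1, h2, fderiv_id']
      simp [ContinuousLinearMap.det, LinearMap.det_id]
    have h3 : fderiv ℝ (Φ t₀) x = J t₀ := (hJd t₀ x).fderiv
    rw [h3, ← hgdet t₀, hconst, hgdet 0, hJ0]

  refine ⟨key, fun x => key 1 x⟩
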